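/- For every integer k ≥ 0 and every paravector x ∈ ℝ^{m+1} ⊂ R_m (the Clifford algebra of signature (0,m)), the decomposition x^k = -(1/(2(m-1)(k+1))) ( Δ_{m+1}(x^{k+2}) - x^c Δ_{m+1}(x^{k+1}) ) holds, where Δ_{m+1} is the Euclidean Laplacian of ℝ^{m+1} acting componentwise and x^c is the Clifford conjugate. -/

import Mathlib

noncomputable section
namespace PaperStmt

/-- Partial derivative in the `i`-th coordinate direction. -/
def pd {A : Type*} [NormedAddCommGroup A] [NormedSpace ℝ A] {m : ℕ}
    (i : Fin (m + 1)) (f : (Fin (m + 1) → ℝ) → A) : (Fin (m + 1) → ℝ) → A :=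
  fun x => fderiv ℝ f x (Pi.single i 1)

/-- The Euclidean Laplacian `Δ_{m+1} = ∑ᵢ ∂ᵢ²` of `ℝ^{m+1}`, acting
componentwise on `A`-valued functions. -/
def lap {A : Type*} [NormedAddCommGroup A] [NormedSpace ℝ A] {m : ℕ}
    (f : (Fin (m + 1) → ℝ) → A) : (Fin (m + 1) → ℝ) → A :=
  fun x => ∑ i : Fin (m + 1), pd i (pd i f) x

/-- The negative-definite quadratic form of signature `(0, m)` on `ℝ^m`. -/
def Qneg (m : ℕ) : QuadraticForm ℝ (Fin m → ℝ) :=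
  QuadraticMap.weightedSumSquares ℝ (fun _ : Fin m => (-1 : ℝ))

/-- The paravector `x₀ + x₁ e₁ + ⋯ + x_m e_m` of the Clifford algebra
`R_{0,m} = CliffordAlgebra (Qneg m)`. -/
def pv (m : ℕ) (x : Fin (m + 1) → ℝ) : CliffordAlgebra (Qneg m) :=
  algebraMap ℝ _ (x 0) +
    ∑ i : Fin m, x i.succ • CliffordAlgebra.ι (Qneg m) (Pi.single i 1)

/-- The Clifford conjugate `xᶜ = x₀ - x₁ e₁ - ⋯ - x_m e_m` of a paravector. -/
def pvConj (m : ℕ) (x : Fin (m + 1) → ℝ) : CliffordAlgebra (Qneg m) :=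
  algebraMap ℝ _ (x 0) -
    ∑ i : Fin m, x i.succ • CliffordAlgebra.ι (Qneg m) (Pi.single i 1)

/-! ### Auxiliary material -/

section Sums
variable {A : Type*} [NormedRing A] [NormedAlgebra ℝ A]

/-- `Hs u v n = ∑_{b<n} (n-b) • u^(n-1-b) v^b`. -/
def Hs (u v : A) (n : ℕ) : A :=
  ∑ b ∈ Finset.range n, (n - b) • (u ^ (n - 1 - b) * v ^ b)

lemma Hs_succ (u v : A) (n : ℕ) :
    Hs u v (n + 1) = u * Hs u v n + ∑ p ∈ Finset.range (n + 1), u ^ (n - p) * v ^ p := by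
  have h1 : u * Hs u v n = ∑ b ∈ Finset.range (n + 1), (n - b) • (u ^ (n - b) * v ^ b) := by
    unfold Hs
    rw [Finset.mul_sum, Finset.sum_range_succ]
    simp only [Nat.sub_self, zero_smul, add_zero]
    refine Finset.sum_congr rfl fun b hb => ?_
    have hb' : b < n := Finset.mem_range.mp hb
    have e1 : n - b = (n - 1 - b) + 1 := by omega
    rw [mul_smul_comm, ← mul_assoc, ← pow_succ', e1]
  have h2 : Hs u v (n + 1)
      = ∑ b ∈ Finset.range (n + 1), ((n - b) • (u ^ (n - b) * v ^ b) + u ^ (n - b) * v ^ b) := by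
    unfold Hs
    refine Finset.sum_congr rfl fun b hb => ?_
    have hb' : b < n + 1 := Finset.mem_range.mp hb
    have e1 : n + 1 - b = (n - b) + 1 := by omega
    have e2 : n + 1 - 1 - b = n - b := by omega
    rw [e1, e2, succ_nsmul]
  rw [h2, Finset.sum_add_distrib, ← h1]

lemma triangle (u v : A) (n : ℕ) :
    ∑ j ∈ Finset.range (n + 1), ∑ p ∈ Finset.range (n - j), u ^ (n - 1 - p) * v ^ p
      = Hs u v n := by
  induction n with
  | zero => simp [Hs]
  | succ n ih =>
      rw [Finset.sum_range_succ']
      have h0 : ∀ j ∈ Finset.range (n + 1),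
          ∑ p ∈ Finset.range (n + 1 - (j + 1)), u ^ (n + 1 - 1 - p) * v ^ p
            = u * ∑ p ∈ Finset.range (n - j), u ^ (n - 1 - p) * v ^ p := by
        intro j hj
        rw [Finset.mul_sum]
        refine Finset.sum_congr (by congr 1; omega) fun p hp => ?_
        have hp' : p < n - j := Finset.mem_range.mp hp
        have h2 : n + 1 - 1 - p = (n - 1 - p) + 1 := by omega
        rw [h2, pow_succ', mul_assoc]
      rw [Finset.sum_congr rfl h0, ← Finset.mul_sum, ih, Nat.sub_zero, Hs_succ]
      simp

lemma Hs_sub (u v : A) (huv : Commute u v) (k : ℕ) :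
    Hs u v (k + 1) - v * Hs u v k = (k + 1) • u ^ k := by
  have h1 : v * Hs u v k
      = ∑ b ∈ Finset.range k, (k - b) • (u ^ (k - 1 - b) * v ^ (b + 1)) := by
    unfold Hs
    rw [Finset.mul_sum]
    refine Finset.sum_congr rfl fun b hb => ?_
    rw [mul_smul_comm, ← mul_assoc, ((huv.symm).pow_right _).eq, mul_assoc, ← pow_succ']
  have h2 : Hs u v (k + 1)
      = ∑ b ∈ Finset.range k, (k - b) • (u ^ (k - 1 - b) * v ^ (b + 1)) + (k + 1) • u ^ k := by
    unfold Hs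
    rw [Finset.sum_range_succ']
    congr 1
    · refine Finset.sum_congr rfl fun b hb => ?_
      have hb' : b < k := Finset.mem_range.mp hb
      have e1 : k + 1 - (b + 1) = k - b := by omega
      have e2 : k + 1 - 1 - (b + 1) = k - 1 - b := by omega
      rw [e1, e2]
    · simp
  rw [h2, h1, add_sub_cancel_left]

end Sums


section Deriv
variable {A : Type*} [NormedRing A] [NormedAlgebra ℝ A] {m : ℕ}
variable (L : (Fin (m + 1) → ℝ) →L[ℝ] A)

def Dm (n : ℕ) (c : Fin (m + 1) → ℝ) : (Fin (m + 1) → ℝ) →L[ℝ] A :=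
  ∑ j ∈ Finset.range n,
    (ContinuousLinearMap.mulLeftRight ℝ A ((L c) ^ j) ((L c) ^ (n - 1 - j))).comp L

lemma hasFDeriv_pow (n : ℕ) (c : Fin (m + 1) → ℝ) :
    HasFDerivAt (fun y => (L y) ^ n) (Dm L n c) c := by
  induction n with
  | zero => simpa [Dm] using hasFDerivAt_const (1 : A) c
  | succ n ih =>
      have h := ih.mul' L.hasFDerivAt
      have hf : (fun y => L y ^ (n + 1)) = fun y => L y ^ n * L y := by
        funext y; rw [pow_succ]
      rw [hf]
      refine h.congr_fderiv (Eq.symm ?_)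
      ext d
      simp only [Dm, ContinuousLinearMap.add_apply, ContinuousLinearMap.coe_smul',
        Pi.smul_apply, ContinuousLinearMap.smulRight_apply, ContinuousLinearMap.sum_apply,
        ContinuousLinearMap.comp_apply, ContinuousLinearMap.mulLeftRight_apply, smul_eq_mul, op_smul_eq_mul]
      rw [Finset.sum_range_succ, Finset.sum_mul]
      have e0 : n + 1 - 1 - n = 0 := by omega
      rw [e0, pow_zero, mul_one]
      rw [add_comm]
      congr 1
      refine Finset.sum_congr rfl fun j hj => ?_
      have hj' : j < n := Finset.mem_range.mp hj
      have e1 : n + 1 - 1 - j = (n - 1 - j) + 1 := by omega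
      rw [e1, pow_succ, ← mul_assoc]

lemma Dm_single (n : ℕ) (c : Fin (m + 1) → ℝ) (i : Fin (m + 1)) :
    Dm L n c (Pi.single i 1)
      = ∑ j ∈ Finset.range n, (L c) ^ j * L (Pi.single i 1) * (L c) ^ (n - 1 - j) := by
  simp [Dm]

lemma pd_powF (n : ℕ) (i : Fin (m + 1)) :
    pd i (fun c => (L c) ^ n)
      = fun c => ∑ j ∈ Finset.range n, (L c) ^ j * L (Pi.single i 1) * (L c) ^ (n - 1 - j) := by
  funext c
  show fderiv ℝ (fun c => (L c) ^ n) c (Pi.single i 1) = _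
  rw [(hasFDeriv_pow L n c).fderiv, Dm_single]

lemma pd_pd_powF (n : ℕ) (i : Fin (m + 1)) (x : Fin (m + 1) → ℝ) :
    pd i (pd i (fun c => (L c) ^ n)) x
      = ∑ j ∈ Finset.range n,
          ((L x) ^ j * L (Pi.single i 1) *
              (∑ p ∈ Finset.range (n - 1 - j),
                (L x) ^ p * L (Pi.single i 1) * (L x) ^ (n - 1 - j - 1 - p))
            + (∑ p ∈ Finset.range j,
                (L x) ^ p * L (Pi.single i 1) * (L x) ^ (j - 1 - p)) * L (Pi.single i 1)
                * (L x) ^ (n - 1 - j)) := by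
  rw [pd_powF]
  have H : HasFDerivAt
      (fun c => ∑ j ∈ Finset.range n, (L c) ^ j * L (Pi.single i 1) * (L c) ^ (n - 1 - j))
      (∑ j ∈ Finset.range n,
        (((L x) ^ j * L (Pi.single i 1)) • (Dm L (n - 1 - j) x)
          + ((Dm L j x).smulRight (L (Pi.single i 1))).smulRight ((L x) ^ (n - 1 - j)))) x := by
    refine HasFDerivAt.fun_sum fun j _ => ?_
    exact ((hasFDeriv_pow L j x).mul_const' (L (Pi.single i 1))).mul' (hasFDeriv_pow L (n - 1 - j) x)
  show fderiv ℝ _ x (Pi.single i 1) = _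
  rw [H.fderiv]
  rw [ContinuousLinearMap.sum_apply]
  refine Finset.sum_congr rfl fun j _ => ?_
  simp only [ContinuousLinearMap.add_apply, ContinuousLinearMap.coe_smul', Pi.smul_apply,
    ContinuousLinearMap.smulRight_apply, smul_eq_mul, Dm_single]
end Deriv

section Cliff
variable {A : Type*} [NormedRing A] [NormedAlgebra ℝ A]
variable (m : ℕ) (φ : CliffordAlgebra (Qneg m) →ₐ[ℝ] A)

/-- the images of the Clifford generators. -/
def E (i : Fin m) : A := φ (CliffordAlgebra.ι (Qneg m) (Pi.single i 1))

/-- basis images for the paravector: index 0 ↦ 1, index i+1 ↦ φ(e_i). -/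
def bv : Fin (m + 1) → A :=
  Fin.cases 1 fun i => E m φ i

@[simp] lemma bv_zero : bv m φ 0 = 1 := rfl
@[simp] lemma bv_succ (i : Fin m) : bv m φ i.succ = E m φ i := by
  simp [bv]

/-- the continuous linear map `c ↦ φ(pv m c)`. -/
def Lm : (Fin (m + 1) → ℝ) →L[ℝ] A :=
  LinearMap.toContinuousLinearMap
    (∑ i : Fin (m + 1), (LinearMap.proj i).smulRight (bv m φ i))

lemma Lm_apply (c : Fin (m + 1) → ℝ) : Lm m φ c = ∑ i : Fin (m + 1), c i • bv m φ i := by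
  simp [Lm, LinearMap.sum_apply, LinearMap.smulRight_apply, LinearMap.proj_apply]

lemma F_eq (c : Fin (m + 1) → ℝ) : φ (pv m c) = Lm m φ c := by
  rw [Lm_apply, pv, Fin.sum_univ_succ, map_add, map_sum]
  simp [Algebra.algebraMap_eq_smul_one, bv, E]

lemma Lm_single (i : Fin (m + 1)) : Lm m φ (Pi.single i 1) = bv m φ i := by
  rw [Lm_apply, Finset.sum_eq_single i]
  · simp
  · intro j _ hji
    simp [Pi.single_apply, hji.symm]
  · simp

lemma Qneg_apply (f : Fin m → ℝ) : Qneg m f = -∑ ℓ : Fin m, f ℓ * f ℓ := by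
  simp [Qneg, QuadraticMap.weightedSumSquares_apply, Finset.sum_neg_distrib]

lemma polar_eq (f g : Fin m → ℝ) :
    QuadraticMap.polar (⇑(Qneg m)) f g = -(2 * ∑ ℓ : Fin m, f ℓ * g ℓ) := by
  simp only [QuadraticMap.polar, Qneg_apply, Pi.add_apply]
  have h : ∑ ℓ : Fin m, (f ℓ + g ℓ) * (f ℓ + g ℓ)
      = ∑ ℓ : Fin m, f ℓ * f ℓ + ∑ ℓ : Fin m, g ℓ * g ℓ + 2 * ∑ ℓ : Fin m, f ℓ * g ℓ := by
    rw [Finset.mul_sum, ← Finset.sum_add_distrib, ← Finset.sum_add_distrib]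
    exact Finset.sum_congr rfl fun ℓ _ => by ring
  rw [h]; ring

lemma E_sq (i : Fin m) : E m φ i * E m φ i = -1 := by
  have h : CliffordAlgebra.ι (Qneg m) (Pi.single i 1) * CliffordAlgebra.ι (Qneg m) (Pi.single i 1)
      = algebraMap ℝ _ (Qneg m (Pi.single i 1)) := CliffordAlgebra.ι_sq_scalar _ _
  have hq : Qneg m (Pi.single i 1) = -1 := by
    rw [Qneg_apply, Finset.sum_eq_single i]
    · simp
    · intro j _ hji; simp [Pi.single_apply, hji]
    · simp
  have h2 := congrArg φ h
  rw [map_mul] at h2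
  rw [E, h2, hq]
  simp

lemma E_anticomm {i j : Fin m} (hij : i ≠ j) : E m φ i * E m φ j = -(E m φ j * E m φ i) := by
  have h := CliffordAlgebra.ι_mul_ι_add_swap (Q := Qneg m) (Pi.single i 1) (Pi.single j 1)
  have hp : QuadraticMap.polar (⇑(Qneg m)) (Pi.single i 1) (Pi.single j 1) = 0 := by
    rw [polar_eq]
    have hz : ∀ ℓ : Fin m, (Pi.single i (1:ℝ) : Fin m → ℝ) ℓ * (Pi.single j (1:ℝ) : Fin m → ℝ) ℓ = 0 := by
      intro ℓ
      rcases eq_or_ne ℓ i with h1 | h1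
      · subst h1; simp [Pi.single_apply, hij.symm]
      · simp [Pi.single_apply, h1]
    simp [hz]
  rw [hp, map_zero] at h
  have h2 := congrArg φ h
  simp only [map_add, map_mul, map_zero] at h2
  exact eq_neg_of_add_eq_zero_left h2

variable (x : Fin (m + 1) → ℝ)

/-- the vector part of the paravector `x`. -/
def wv : A := φ (CliffordAlgebra.ι (Qneg m) (fun i : Fin m => x i.succ))

lemma wv_eq : wv m φ x = ∑ i : Fin m, x i.succ • E m φ i := by
  have h : (fun i : Fin m => x i.succ) = ∑ i : Fin m, Pi.single i (x i.succ) :=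
    (Finset.univ_sum_single _).symm
  rw [wv, h, map_sum, map_sum]
  refine Finset.sum_congr rfl fun i _ => ?_
  have h2 : (Pi.single i (x i.succ) : Fin m → ℝ) = x i.succ • (Pi.single i 1 : Fin m → ℝ) := by
    funext ℓ
    by_cases hℓ : ℓ = i <;> simp [Pi.single_apply, hℓ]
  rw [h2, map_smul, map_smul, E]

lemma u_eq : Lm m φ x = x 0 • 1 + wv m φ x := by
  rw [Lm_apply, Fin.sum_univ_succ, wv_eq]
  simp

lemma v_eq : φ (pvConj m x) = x 0 • 1 - wv m φ x := by
  rw [pvConj, map_sub, map_sum, wv_eq]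
  simp [Algebra.algebraMap_eq_smul_one, E]

lemma wv_sq : wv m φ x * wv m φ x = (Qneg m (fun i : Fin m => x i.succ)) • (1 : A) := by
  rw [wv, ← map_mul, CliffordAlgebra.ι_sq_scalar]
  rw [AlgHom.commutes, Algebra.algebraMap_eq_smul_one]

lemma sum_EE : ∑ i : Fin m, E m φ i * E m φ i = -((m : ℝ) • (1 : A)) := by
  rw [Finset.sum_congr rfl (fun i _ => E_sq m φ i), Finset.sum_const, Finset.card_univ,
    Fintype.card_fin, ← Nat.cast_smul_eq_nsmul ℝ, smul_neg]

lemma sum_EjE (j : Fin m) :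
    ∑ i : Fin m, E m φ i * E m φ j * E m φ i = ((m : ℝ) - 2) • E m φ j := by
  have hm1 : 1 ≤ m := by
    rcases j with ⟨j, hj⟩; omega
  rw [← Finset.add_sum_erase _ _ (Finset.mem_univ j)]
  have h1 : E m φ j * E m φ j * E m φ j = -(E m φ j) := by
    rw [E_sq]; simp
  have h2 : ∀ i ∈ Finset.univ.erase j, E m φ i * E m φ j * E m φ i = E m φ j := by
    intro i hi
    have hij : i ≠ j := Finset.ne_of_mem_erase hi
    rw [E_anticomm m φ hij, neg_mul, mul_assoc, E_sq]
    simp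
  rw [Finset.sum_congr rfl h2, Finset.sum_const, Finset.card_erase_of_mem (Finset.mem_univ j),
    Finset.card_univ, Fintype.card_fin, h1]
  have h3 : ((m - 1 : ℕ) : ℝ) = (m : ℝ) - 1 := by
    push_cast [Nat.cast_sub hm1]; ring
  rw [← Nat.cast_smul_eq_nsmul ℝ, h3]
  module

lemma sum_EwE : ∑ i : Fin m, E m φ i * wv m φ x * E m φ i = ((m : ℝ) - 2) • wv m φ x := by
  have h : ∀ i : Fin m, E m φ i * wv m φ x * E m φ i
      = ∑ j : Fin m, x j.succ • (E m φ i * E m φ j * E m φ i) := by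
    intro i
    rw [wv_eq, Finset.mul_sum, Finset.sum_mul]
    refine Finset.sum_congr rfl fun j _ => ?_
    rw [mul_smul_comm, smul_mul_assoc]
  rw [Finset.sum_congr rfl (fun i _ => h i), Finset.sum_comm]
  have h2 : ∀ j : Fin m, ∑ i : Fin m, x j.succ • (E m φ i * E m φ j * E m φ i)
      = x j.succ • (((m : ℝ) - 2) • E m φ j) := by
    intro j
    rw [← Finset.smul_sum, sum_EjE]
  rw [Finset.sum_congr rfl (fun j _ => h2 j), wv_eq, Finset.smul_sum]
  refine Finset.sum_congr rfl fun j _ => ?_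
  rw [smul_comm]

lemma pow_structure (b : ℕ) :
    ∃ α β : ℝ, (Lm m φ x) ^ b = α • (1 : A) + β • wv m φ x
      ∧ (φ (pvConj m x)) ^ b = α • (1 : A) - β • wv m φ x := by
  induction b with
  | zero => exact ⟨1, 0, by simp, by simp⟩
  | succ b ih =>
      obtain ⟨α, β, hu, hv⟩ := ih
      set q : ℝ := Qneg m (fun i : Fin m => x i.succ) with hq
      refine ⟨α * x 0 + β * q, α + β * x 0, ?_, ?_⟩
      · rw [pow_succ, hu, u_eq]
        simp only [add_mul, mul_add, smul_mul_assoc, mul_smul_comm, one_mul, mul_one,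
          wv_sq m φ x, ← hq, smul_smul]
        module
      · rw [pow_succ, hv, v_eq]
        simp only [sub_mul, mul_sub, smul_mul_assoc, mul_smul_comm, one_mul, mul_one,
          wv_sq m φ x, ← hq, smul_smul]
        module

lemma K (b : ℕ) :
    ∑ i : Fin (m + 1), bv m φ i * (Lm m φ x) ^ b * bv m φ i
      = (1 - (m : ℝ)) • (φ (pvConj m x)) ^ b := by
  obtain ⟨α, β, hu, hv⟩ := pow_structure m φ x b
  rw [hu, hv, Fin.sum_univ_succ]
  simp only [bv_zero, bv_succ, one_mul, mul_one]
  have h : ∀ i : Fin m, E m φ i * (α • (1:A) + β • wv m φ x) * E m φ i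
      = α • (E m φ i * E m φ i) + β • (E m φ i * wv m φ x * E m φ i) := by
    intro i
    simp only [mul_add, add_mul, mul_smul_comm, smul_mul_assoc, mul_one, one_mul]
  rw [Finset.sum_congr rfl (fun i _ => h i), Finset.sum_add_distrib, ← Finset.smul_sum,
    ← Finset.smul_sum, sum_EE, sum_EwE]
  module

lemma comm_uv : Commute (Lm m φ x) (φ (pvConj m x)) := by
  rw [Commute, SemiconjBy, u_eq, v_eq]
  simp only [mul_sub, sub_mul, add_mul, mul_add, smul_mul_assoc, mul_smul_comm,
    one_mul, mul_one]
  module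


lemma sum_mid (b' : ℕ) (a d : A) :
    ∑ i : Fin (m + 1), a * (bv m φ i * ((Lm m φ x) ^ b' * (bv m φ i * d)))
      = (1 - (m : ℝ)) • (a * ((φ (pvConj m x)) ^ b' * d)) := by
  have h : ∀ i : Fin (m + 1), a * (bv m φ i * ((Lm m φ x) ^ b' * (bv m φ i * d)))
      = a * ((bv m φ i * (Lm m φ x) ^ b' * bv m φ i) * d) := by
    intro i; simp only [mul_assoc]
  rw [Finset.sum_congr rfl (fun i _ => h i), ← Finset.mul_sum, ← Finset.sum_mul, K m φ x b',
    smul_mul_assoc, mul_smul_comm]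

lemma lap_pow (n : ℕ) :
    lap (fun c => (Lm m φ c) ^ (n + 1)) x
      = (1 - (m : ℝ)) •
          (Hs (Lm m φ x) (φ (pvConj m x)) n + Hs (Lm m φ x) (φ (pvConj m x)) n) := by
  classical
  have hcomm : Commute (Lm m φ x) (φ (pvConj m x)) := comm_uv m φ x
  set u : A := Lm m φ x with hu
  set v : A := φ (pvConj m x) with hv
  have huv : ∀ a b : ℕ, v ^ a * u ^ b = u ^ b * v ^ a := fun a b => ((hcomm.pow_pow b a).eq).symm
  have hstep : ∀ i : Fin (m + 1), pd i (pd i (fun c => (Lm m φ c) ^ (n + 1))) x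
      = (∑ j ∈ Finset.range (n + 1), ∑ p ∈ Finset.range (n - j),
          u ^ j * (bv m φ i * (u ^ p * (bv m φ i * u ^ (n - j - 1 - p)))))
        + ∑ j ∈ Finset.range (n + 1), ∑ p ∈ Finset.range j,
            u ^ p * (bv m φ i * (u ^ (j - 1 - p) * (bv m φ i * u ^ (n - j)))) := by
    intro i
    rw [pd_pd_powF (Lm m φ) (n + 1) i x]
    simp only [Lm_single]
    rw [Finset.sum_add_distrib]
    congr 1
    · refine Finset.sum_congr rfl fun j hj => ?_
      have hj' : j < n + 1 := Finset.mem_range.mp hj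
      rw [Finset.mul_sum]
      refine Finset.sum_congr (by congr 1 <;> omega) fun p hp => ?_
      have hp' : p < n - j := Finset.mem_range.mp hp
      have e2 : n + 1 - 1 - j - 1 - p = n - j - 1 - p := by omega
      rw [e2]
      simp only [mul_assoc]
      rfl
    · refine Finset.sum_congr rfl fun j hj => ?_
      have hj' : j < n + 1 := Finset.mem_range.mp hj
      have e1 : n + 1 - 1 - j = n - j := by omega
      rw [e1, Finset.sum_mul, Finset.sum_mul]
      refine Finset.sum_congr rfl fun p hp => ?_
      simp only [mul_assoc]
      rfl
  show ∑ i : Fin (m + 1), pd i (pd i (fun c => (Lm m φ c) ^ (n + 1))) x = _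
  rw [Finset.sum_congr rfl (fun i _ => hstep i), Finset.sum_add_distrib]
  have hS1 : ∑ i : Fin (m + 1), ∑ j ∈ Finset.range (n + 1), ∑ p ∈ Finset.range (n - j),
        u ^ j * (bv m φ i * (u ^ p * (bv m φ i * u ^ (n - j - 1 - p))))
      = (1 - (m : ℝ)) • Hs u v n := by
    rw [Finset.sum_comm]
    have h1 : ∀ j ∈ Finset.range (n + 1),
        ∑ i : Fin (m + 1), ∑ p ∈ Finset.range (n - j),
            u ^ j * (bv m φ i * (u ^ p * (bv m φ i * u ^ (n - j - 1 - p))))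
          = ∑ p ∈ Finset.range (n - j), (1 - (m : ℝ)) • (u ^ (n - 1 - p) * v ^ p) := by
      intro j hj
      have hj' : j < n + 1 := Finset.mem_range.mp hj
      rw [Finset.sum_comm]
      refine Finset.sum_congr rfl fun p hp => ?_
      have hp' : p < n - j := Finset.mem_range.mp hp
      rw [sum_mid m φ x p (u ^ j) (u ^ (n - j - 1 - p))]
      congr 1
      rw [huv p (n - j - 1 - p), ← mul_assoc, ← pow_add]
      congr 2
      omega
    rw [Finset.sum_congr rfl h1]
    simp only [← Finset.smul_sum]
    rw [triangle]
  have hS2 : ∑ i : Fin (m + 1), ∑ j ∈ Finset.range (n + 1), ∑ p ∈ Finset.range j,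
        u ^ p * (bv m φ i * (u ^ (j - 1 - p) * (bv m φ i * u ^ (n - j))))
      = (1 - (m : ℝ)) • Hs u v n := by
    rw [Finset.sum_comm]
    have h1 : ∀ j ∈ Finset.range (n + 1),
        ∑ i : Fin (m + 1), ∑ p ∈ Finset.range j,
            u ^ p * (bv m φ i * (u ^ (j - 1 - p) * (bv m φ i * u ^ (n - j))))
          = ∑ p ∈ Finset.range j, (1 - (m : ℝ)) • (u ^ (n - 1 - (j - 1 - p)) * v ^ (j - 1 - p)) := by
      intro j hj
      have hj' : j < n + 1 := Finset.mem_range.mp hj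
      rw [Finset.sum_comm]
      refine Finset.sum_congr rfl fun p hp => ?_
      have hp' : p < j := Finset.mem_range.mp hp
      rw [sum_mid m φ x (j - 1 - p) (u ^ p) (u ^ (n - j))]
      congr 1
      rw [huv (j - 1 - p) (n - j), ← mul_assoc, ← pow_add]
      congr 2
      omega
    rw [Finset.sum_congr rfl h1]
    have h2 : ∀ j ∈ Finset.range (n + 1),
        ∑ p ∈ Finset.range j, (1 - (m : ℝ)) • (u ^ (n - 1 - (j - 1 - p)) * v ^ (j - 1 - p))
          = ∑ p ∈ Finset.range j, (1 - (m : ℝ)) • (u ^ (n - 1 - p) * v ^ p) := by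
      intro j hj
      exact Finset.sum_range_reflect (fun p => (1 - (m : ℝ)) • (u ^ (n - 1 - p) * v ^ p)) j
    rw [Finset.sum_congr rfl h2]
    rw [← Finset.sum_range_reflect
      (fun j => ∑ p ∈ Finset.range j, (1 - (m : ℝ)) • (u ^ (n - 1 - p) * v ^ p)) (n + 1)]
    have h3 : ∀ j ∈ Finset.range (n + 1),
        ∑ p ∈ Finset.range (n + 1 - 1 - j), (1 - (m : ℝ)) • (u ^ (n - 1 - p) * v ^ p)
          = ∑ p ∈ Finset.range (n - j), (1 - (m : ℝ)) • (u ^ (n - 1 - p) * v ^ p) := by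
      intro j hj
      refine Finset.sum_congr (by congr 1 <;> omega) fun p hp => rfl
    rw [Finset.sum_congr rfl h3]
    simp only [← Finset.smul_sum]
    rw [triangle]
  rw [hS1, hS2, ← smul_add]

end Cliff

/-- **Axially monogenic decomposition of paravector powers.**
For every integer `k ≥ 0` and every paravector `x ∈ ℝ^{m+1} ⊂ R_m` (the
Clifford algebra of signature `(0,m)`, here realized inside a normed real
algebra `A` via an injective algebra morphism `φ`, which provides the topology
needed to take derivatives), one has
`x^k = -(1/(2(m-1)(k+1))) ( Δ_{m+1}(x^{k+2}) - xᶜ Δ_{m+1}(x^{k+1}) )`,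
where `Δ_{m+1}` is the Euclidean Laplacian of `ℝ^{m+1}` acting componentwise. -/
theorem clifford_paravector_power_decomposition
    {A : Type*} [NormedRing A] [NormedAlgebra ℝ A]
    (m : ℕ) (hm : 2 ≤ m)
    (φ : CliffordAlgebra (Qneg m) →ₐ[ℝ] A) (hφ : Function.Injective φ)
    (k : ℕ) (x : Fin (m + 1) → ℝ) :
    φ (pv m x) ^ k
      = -((2 * ((m : ℝ) - 1) * ((k : ℝ) + 1))⁻¹) •
          (lap (fun c => φ (pv m c) ^ (k + 2)) x
            - φ (pvConj m x) * lap (fun c => φ (pv m c) ^ (k + 1)) x) := by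
  have hfun : ∀ N : ℕ, (fun c => φ (pv m c) ^ N) = fun c => (Lm m φ c) ^ N := by
    intro N; funext c; rw [F_eq]
  rw [hfun (k + 2), hfun (k + 1), F_eq m φ x]
  have hcomm : Commute (Lm m φ x) (φ (pvConj m x)) := comm_uv m φ x
  set u : A := Lm m φ x with hu
  set v : A := φ (pvConj m x) with hv
  have h2 : lap (fun c => (Lm m φ c) ^ (k + 2)) x
      = (1 - (m : ℝ)) • (Hs u v (k + 1) + Hs u v (k + 1)) := lap_pow m φ x (k + 1)
  have h1 : lap (fun c => (Lm m φ c) ^ (k + 1)) x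
      = (1 - (m : ℝ)) • (Hs u v k + Hs u v k) := lap_pow m φ x k
  rw [h2, h1]
  have h3 : v * ((1 - (m : ℝ)) • (Hs u v k + Hs u v k))
      = (1 - (m : ℝ)) • (v * Hs u v k + v * Hs u v k) := by
    rw [mul_smul_comm, mul_add]
  rw [h3, ← smul_sub]
  have hd := Hs_sub u v hcomm k
  have h4 : (Hs u v (k + 1) + Hs u v (k + 1)) - (v * Hs u v k + v * Hs u v k)
      = (k + 1) • u ^ k + (k + 1) • u ^ k := by
    rw [← hd]; abel
  rw [h4, ← Nat.cast_smul_eq_nsmul ℝ (k + 1) (u ^ k)]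
  push_cast
  rw [← smul_add, smul_smul, smul_smul]
  have h5 : u ^ k + u ^ k = (2 : ℝ) • u ^ k := by module
  rw [h5, smul_smul]
  have hs : -(2 * ((m : ℝ) - 1) * ((k : ℝ) + 1))⁻¹ * (1 - (m : ℝ)) * ((k : ℝ) + 1) * 2 = 1 := by
    have hm' : (m : ℝ) - 1 ≠ 0 := by
      have h2m : (2 : ℝ) ≤ (m : ℝ) := by exact_mod_cast hm
      intro h; linarith
    have hk : (k : ℝ) + 1 ≠ 0 := by positivity
    field_simp
    ring
  rw [hs, one_smul]


end PaperStmt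
end
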